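/- Every von Neumann algebra is centrally prime: if x, y ∈ B with 0 ≤ x,y ≤ 1 and xBy = {0}, then there is a central element e with x ≤ e ≤ 1 and y ≤ 1 - e ≤ 1. -/

import Mathlib

open ContinuousLinearMap Submodule

local notation "⟪" a ", " b "⟫" => inner (𝕜 := ℂ) a b

/-- If a continuous linear map and its adjoint both preserve a complete submodule,
then the map commutes with the (extended) orthogonal projection onto it. -/
lemma commute_orthogonalProjection_of_invariant
    {H : Type*} [NormedAddCommGroup H] [InnerProductSpace ℂ H] [CompleteSpace H]
    (K : Submodule ℂ H) [CompleteSpace K] (z : H →L[ℂ] H)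
    (hz : ∀ k ∈ K, z k ∈ K) (hz' : ∀ k ∈ K, (ContinuousLinearMap.adjoint z) k ∈ K) :
    z * (K.subtypeL ∘L orthogonalProjection K) = (K.subtypeL ∘L orthogonalProjection K) * z := by
  set e : H →L[ℂ] H := K.subtypeL ∘L orthogonalProjection K with he
  have hefix : ∀ k ∈ K, e k = k := fun k hk => K.starProjection_eq_self_iff.mpr hk
  have hemem : ∀ ξ : H, e ξ ∈ K := fun ξ => (orthogonalProjection K ξ).2
  ext ξ
  have hdec : ξ = e ξ + (ξ - e ξ) := by abel
  have horth : ξ - e ξ ∈ Kᗮ := K.sub_starProjection_mem_orthogonal ξ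
  have hz_orth : z (ξ - e ξ) ∈ Kᗮ := by
    intro u hu
    have : ⟪u, z (ξ - e ξ)⟫ = ⟪(ContinuousLinearMap.adjoint z) u, ξ - e ξ⟫ := by
      rw [ContinuousLinearMap.adjoint_inner_left]
    rw [this]
    exact horth _ (hz' u hu)
  have h1 : e (z (e ξ)) = z (e ξ) := hefix _ (hz _ (hemem ξ))
  have h2 : e (z (ξ - e ξ)) = 0 := by
    have h := orthogonalProjection_mem_subspace_orthogonalComplement_eq_zero hz_orth
    have h' : e (z (ξ - e ξ)) = K.subtypeL ((orthogonalProjection K) (z (ξ - e ξ))) := rfl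
    rw [h', h]
    simp
  calc z (e ξ) = e (z (e ξ)) + e (z (ξ - e ξ)) := by rw [h1, h2, add_zero]
    _ = e (z (e ξ) + z (ξ - e ξ)) := by rw [map_add]
    _ = e (z ξ) := by rw [← map_add, ← hdec]

theorem vonNeumannAlgebra_centrally_prime
    {H : Type*} [NormedAddCommGroup H] [InnerProductSpace ℂ H] [CompleteSpace H]
    (B : VonNeumannAlgebra H) (x y : H →L[ℂ] H)
    (hxB : x ∈ B) (hyB : y ∈ B)
    (hx0 : 0 ≤ x) (hx1 : x ≤ 1) (hy0 : 0 ≤ y) (hy1 : y ≤ 1)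
    (hxy : ∀ b ∈ B, x * b * y = 0) :
    ∃ e ∈ B, (∀ b ∈ B, e * b = b * e) ∧ x ≤ e ∧ e ≤ 1 ∧ y ≤ 1 - e ∧ 1 - e ≤ 1 := by
  classical
  -- the generating set and the closed invariant subspace
  set S : Set H := {h | ∃ b ∈ B, ∃ ξ : H, (b * x) ξ = h} with hS
  set K : Submodule ℂ H := (Submodule.span ℂ S).topologicalClosure with hK
  have hKclosed : IsClosed (K : Set H) := (Submodule.span ℂ S).isClosed_topologicalClosure
  haveI : CompleteSpace K := hKclosed.completeSpace_coe
  set e : H →L[ℂ] H := K.subtypeL ∘L orthogonalProjection K with he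
  have hsa : IsSelfAdjoint e := isSelfAdjoint_starProjection K
  have hxsa : IsSelfAdjoint x := ((ContinuousLinearMap.nonneg_iff_isPositive x).mp hx0).isSelfAdjoint
  have hysa : IsSelfAdjoint y := ((ContinuousLinearMap.nonneg_iff_isPositive y).mp hy0).isSelfAdjoint
  have hefix : ∀ k ∈ K, e k = k := fun k hk => K.starProjection_eq_self_iff.mpr hk
  -- invariance criterion
  have hinv : ∀ z : H →L[ℂ] H, (∀ s ∈ S, z s ∈ K) → ∀ k ∈ K, z k ∈ K := by
    intro z hzS k hk
    have hle : K ≤ Submodule.comap (z : H →ₗ[ℂ] H) K := by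
      apply Submodule.topologicalClosure_minimal
      · exact Submodule.span_le.mpr hzS
      · exact hKclosed.preimage z.continuous
    exact hle hk
  -- elements of B preserve K
  have hBinv : ∀ z : H →L[ℂ] H, z ∈ B → ∀ k ∈ K, z k ∈ K := by
    intro z hz
    apply hinv
    rintro s ⟨b, hb, ξ, rfl⟩
    refine Submodule.le_topologicalClosure _ (Submodule.subset_span ?_)
    exact ⟨z * b, mul_mem hz hb, ξ, by simp [mul_assoc]⟩
  -- elements of the commutant preserve K
  have hCinv : ∀ z : H →L[ℂ] H, (∀ g ∈ B, g * z = z * g) → ∀ k ∈ K, z k ∈ K := by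
    intro z hz
    apply hinv
    rintro s ⟨b, hb, ξ, rfl⟩
    refine Submodule.le_topologicalClosure _ (Submodule.subset_span ?_)
    refine ⟨b, hb, z ξ, ?_⟩
    have : z * (b * x) = (b * x) * z := by
      rw [← mul_assoc, ← hz b hb, mul_assoc, ← hz x hxB, ← mul_assoc]
    calc (b * x) (z ξ) = ((b * x) * z) ξ := rfl
      _ = (z * (b * x)) ξ := by rw [this]
      _ = z ((b * x) ξ) := rfl
  -- commutation of e with invariant operators
  have hcomm : ∀ z : H →L[ℂ] H, (∀ k ∈ K, z k ∈ K) →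
      (∀ k ∈ K, (star z) k ∈ K) → z * e = e * z := by
    intro z h1 h2
    refine commute_orthogonalProjection_of_invariant K z h1 ?_
    simpa [ContinuousLinearMap.star_eq_adjoint] using h2
  -- e is in B (double commutant)
  have heB : e ∈ B := by
    rw [← SetLike.mem_coe, ← B.centralizer_centralizer]
    intro z hz
    rw [Set.mem_centralizer_iff] at hz
    have hzst : ∀ g ∈ B, g * star z = star z * g := by
      intro g hg
      have := hz (star g) (star_mem hg)
      calc g * star z = star (z * star g) := by simp [star_mul]
        _ = star (star g * z) := by rw [this]
        _ = star z * g := by simp [star_mul]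
    exact hcomm z (hCinv z (fun g hg => hz g hg)) (hCinv (star z) hzst)
  -- e is central
  have hcentral : ∀ b ∈ B, e * b = b * e := by
    intro b hb
    exact (hcomm b (hBinv b hb) (hBinv (star b) (star_mem hb))).symm
  -- algebraic identities
  have hee : e * e = e := by
    ext ξ
    exact hefix _ ((orthogonalProjection K ξ).2)
  have hex : e * x = x := by
    ext ξ
    have hmem : x ξ ∈ K := by
      refine Submodule.le_topologicalClosure _ (Submodule.subset_span ?_)
      exact ⟨1, one_mem B, ξ, by simp⟩
    exact hefix _ hmem
  have hxe : x * e = x := by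
    have := congrArg star hex
    rwa [star_mul, hsa.star_eq, hxsa.star_eq] at this
  have hey : e * y = 0 := by
    ext ξ
    have hperp : y ξ ∈ Kᗮ := by
      intro u hu
      have hle : K ≤ (ℂ ∙ (y ξ))ᗮ := by
        apply Submodule.topologicalClosure_minimal
        · rw [Submodule.span_le]
          rintro s ⟨b, hb, η, rfl⟩
          rw [SetLike.mem_coe, Submodule.mem_orthogonal_singleton_iff_inner_left]
          have hadj : ContinuousLinearMap.adjoint (b * x) = x * star b := by
            rw [← ContinuousLinearMap.star_eq_adjoint, star_mul, hxsa.star_eq]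
          calc ⟪(b * x) η, y ξ⟫ = ⟪η, (ContinuousLinearMap.adjoint (b * x)) (y ξ)⟫ :=
                (ContinuousLinearMap.adjoint_inner_right _ _ _).symm
            _ = ⟪η, ((x * star b * y)) ξ⟫ := by rw [hadj]; rfl
            _ = 0 := by rw [hxy (star b) (star_mem hb)]; simp
        · exact (ℂ ∙ (y ξ)).isClosed_orthogonal
      exact (Submodule.mem_orthogonal_singleton_iff_inner_left).mp (hle hu)
    have := orthogonalProjection_mem_subspace_orthogonalComplement_eq_zero hperp
    simp [he, ContinuousLinearMap.mul_apply, ContinuousLinearMap.comp_apply, this]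
  have hye : y * e = 0 := by
    have := congrArg star hey
    rwa [star_mul, hsa.star_eq, hysa.star_eq, star_zero] at this
  -- positivity statements via conjugation
  have headj : ContinuousLinearMap.adjoint e = e := by
    rw [← ContinuousLinearMap.star_eq_adjoint, hsa.star_eq]
  have hsa1e : IsSelfAdjoint (1 - e) := by
    simp [IsSelfAdjoint, star_sub, hsa.star_eq]
  have h1eadj : ContinuousLinearMap.adjoint (1 - e) = 1 - e := by
    rw [← ContinuousLinearMap.star_eq_adjoint, hsa1e.star_eq]
  have hx_le_e : x ≤ e := by
    rw [ContinuousLinearMap.le_def]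
    have hpos := ((ContinuousLinearMap.le_def x 1).mp hx1).adjoint_conj e
    have : e ∘L (1 - x) ∘L e = e - x := by
      have : e * (1 - x) * e = e - x := by
        rw [mul_sub, mul_one, sub_mul, hee, mul_assoc, hxe, hex]
      simpa [ContinuousLinearMap.mul_def, ContinuousLinearMap.comp_assoc] using this
    rwa [headj, this] at hpos
  have he_le_1 : e ≤ 1 := by
    rw [ContinuousLinearMap.le_def]
    have hpos := (ContinuousLinearMap.isPositive_one (E := H) (𝕜 := ℂ)).adjoint_conj (1 - e)
    have : (1 - e) ∘L (1 : H →L[ℂ] H) ∘L (1 - e) = 1 - e := by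
      have : ((1 : H →L[ℂ] H) - e) * 1 * (1 - e) = 1 - e := by
        simp only [mul_one, sub_mul, one_mul, mul_sub, hee]
        abel
      simpa [ContinuousLinearMap.mul_def, ContinuousLinearMap.comp_assoc, ContinuousLinearMap.one_def] using this
    rwa [h1eadj, this] at hpos
  have hy_le : y ≤ 1 - e := by
    rw [ContinuousLinearMap.le_def]
    have hpos := ((ContinuousLinearMap.le_def y 1).mp hy1).adjoint_conj (1 - e)
    have : (1 - e) ∘L (1 - y) ∘L (1 - e) = (1 - e) - y := by
      have : ((1 : H →L[ℂ] H) - e) * (1 - y) * (1 - e) = (1 - e) - y := by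
        simp only [sub_mul, mul_sub, one_mul, mul_one, hee, hey, hye, zero_mul, mul_zero,
          sub_zero, zero_sub]
        abel
      simpa [ContinuousLinearMap.mul_def, ContinuousLinearMap.comp_assoc] using this
    rwa [h1eadj, this] at hpos
  have h1e_le_1 : 1 - e ≤ 1 := by
    rw [ContinuousLinearMap.le_def]
    have hpos := (ContinuousLinearMap.isPositive_one (E := H) (𝕜 := ℂ)).adjoint_conj e
    have : e ∘L (1 : H →L[ℂ] H) ∘L e = e := by
      have : e * 1 * e = e := by rw [mul_one, hee]
      simpa [ContinuousLinearMap.mul_def, ContinuousLinearMap.comp_assoc, ContinuousLinearMap.one_def] using this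
    rw [headj, this] at hpos
    simpa using hpos
  exact ⟨e, heB, hcentral, hx_le_e, he_le_1, hy_le, h1e_le_1⟩
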